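/- Let (X,ρ) be a metric space, T ⊆ [0,∞) an unbounded subset containing 0, and γ : T → X. Then: (i) if γ is an almost-geodesic ray, it is a weakly-geodesic ray; (ii) if γ is a weakly-geodesic ray, then for every y ∈ X the limit of φ_y(γ(t)) = ρ(γ(t),γ(0)) − ρ(γ(t),y) as t → ∞ along T exists; (iii) if γ is a geodesic ray, then for every y ∈ X the function t ↦ φ_y(γ(t)) is non-decreasing on T and bounded above by ρ(y,γ(0)). -/
import Mathlib


/-- `γ : T → X` is a geodesic ray: `ρ(γ(t),γ(s)) = |t − s|` for all `t, s ∈ T`. -/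
def IsGeodesicRay {X : Type*} [MetricSpace X] (T : Set ℝ) (γ : ℝ → X) : Prop :=
  ∀ t ∈ T, ∀ s ∈ T, dist (γ t) (γ s) = |t - s|

/-- `γ : T → X` is an almost-geodesic ray: for every `ε > 0` there is `N` such that
for `t ≥ s ≥ N` in `T`, `|ρ(γ(t),γ(s)) + ρ(γ(s),γ(0)) − t| < ε`. -/
def IsAlmostGeodesicRay {X : Type*} [MetricSpace X] (T : Set ℝ) (γ : ℝ → X) : Prop :=
  ∀ ε : ℝ, 0 < ε → ∃ N : ℝ, ∀ t ∈ T, ∀ s ∈ T, N ≤ s → s ≤ t →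
    |dist (γ t) (γ s) + dist (γ s) (γ 0) - t| < ε

/-- `γ : T → X` is a weakly-geodesic ray: for every `y ∈ X` and `ε > 0` there is `N`
such that for all `s, t ∈ T` with `s, t ≥ N`, `|ρ(γ(t),γ(0)) − t| < ε` and
`|ρ(γ(t),y) − ρ(γ(s),y) − (t − s)| < ε`. -/
def IsWeaklyGeodesicRay {X : Type*} [MetricSpace X] (T : Set ℝ) (γ : ℝ → X) : Prop :=
  ∀ y : X, ∀ ε : ℝ, 0 < ε → ∃ N : ℝ, ∀ t ∈ T, ∀ s ∈ T, N ≤ t → N ≤ s →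
    |dist (γ t) (γ 0) - t| < ε ∧
    |dist (γ t) y - dist (γ s) y - (t - s)| < ε

/-- Auxiliary: a real-valued function that is Cauchy at infinity along `T` converges
along `atTop ⊓ 𝓟 T`. -/
lemma aux_tendsto_of_cauchy (T : Set ℝ) (hTunbdd : ∀ M : ℝ, ∃ t ∈ T, M < t) (ψ : ℝ → ℝ)
    (h : ∀ ε : ℝ, 0 < ε → ∃ N : ℝ, ∀ t ∈ T, ∀ s ∈ T, N ≤ t → N ≤ s → |ψ t - ψ s| < ε) :
    ∃ l : ℝ, Filter.Tendsto ψ (Filter.atTop ⊓ Filter.principal T) (nhds l) := by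
  choose c hcT hcgt using fun n : ℕ => hTunbdd n
  have hcauchy : CauchySeq (fun n => ψ (c n)) := by
    rw [Metric.cauchySeq_iff]
    intro ε hε
    obtain ⟨N, hN⟩ := h ε hε
    obtain ⟨n0, hn0⟩ := exists_nat_ge N
    refine ⟨n0, fun m hm n hn => ?_⟩
    rw [Real.dist_eq]
    exact hN (c m) (hcT m) (c n) (hcT n)
      (le_of_lt (lt_of_le_of_lt (hn0.trans (Nat.cast_le.mpr hm)) (hcgt m)))
      (le_of_lt (lt_of_le_of_lt (hn0.trans (Nat.cast_le.mpr hn)) (hcgt n)))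
  obtain ⟨l, hl⟩ := cauchySeq_tendsto_of_complete hcauchy
  refine ⟨l, ?_⟩
  rw [Metric.tendsto_nhds]
  intro ε hε
  obtain ⟨N, hN⟩ := h (ε / 2) (by linarith)
  -- find n with c n ≥ N and |ψ (c n) - l| < ε/2
  have : ∀ᶠ n in Filter.atTop, |ψ (c n) - l| < ε / 2 := by
    have := Metric.tendsto_nhds.mp hl (ε / 2) (by linarith)
    simpa [Real.dist_eq] using this
  obtain ⟨n0, hn0⟩ := exists_nat_ge N
  obtain ⟨n, hn1, hn2⟩ := (this.and (Filter.eventually_ge_atTop n0)).exists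
  rw [Filter.eventually_inf_principal]
  filter_upwards [Filter.eventually_ge_atTop N] with t ht htT
  rw [Real.dist_eq]
  have hcn : N ≤ c n := le_of_lt (lt_of_le_of_lt (hn0.trans (Nat.cast_le.mpr hn2)) (hcgt n))
  have h1 := hN t htT (c n) (hcT n) ht hcn
  have h1' := abs_lt.mp h1
  have h2' := abs_lt.mp hn1
  rw [abs_lt]
  constructor <;> linarith

theorem stmt5 {X : Type*} [MetricSpace X] (T : Set ℝ)
    (hT : T ⊆ Set.Ici (0 : ℝ)) (hT0 : (0 : ℝ) ∈ T)
    (hTunbdd : ∀ M : ℝ, ∃ t ∈ T, M < t) (γ : ℝ → X) :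
    (IsAlmostGeodesicRay T γ → IsWeaklyGeodesicRay T γ) ∧
    (IsWeaklyGeodesicRay T γ → ∀ y : X, ∃ l : ℝ,
      Filter.Tendsto (fun t : ℝ => dist (γ t) (γ 0) - dist (γ t) y)
        (Filter.atTop ⊓ Filter.principal T) (nhds l)) ∧
    (IsGeodesicRay T γ → ∀ y : X,
      (∀ s ∈ T, ∀ t ∈ T, s ≤ t →
        dist (γ s) (γ 0) - dist (γ s) y ≤ dist (γ t) (γ 0) - dist (γ t) y) ∧
      (∀ t ∈ T, dist (γ t) (γ 0) - dist (γ t) y ≤ dist y (γ 0))) := by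
  refine ⟨?_, ?_, ?_⟩
  · -- (i) almost-geodesic → weakly geodesic
    intro ha y ε hε
    set ε' := ε / 5 with hε'def
    have hε' : 0 < ε' := by positivity
    obtain ⟨N, hN⟩ := ha ε' hε'
    set ψ : ℝ → ℝ := fun u => dist (γ u) (γ 0) - dist (γ u) y with hψ
    -- basic: for t ∈ T with N ≤ t, |dist (γ t) (γ 0) - t| < ε'
    have hbase : ∀ t ∈ T, N ≤ t → |dist (γ t) (γ 0) - t| < ε' := by
      intro t htT hNt
      have := hN t htT t htT hNt le_rfl
      simpa using this
    -- almost monotone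
    have hmono : ∀ s ∈ T, ∀ t ∈ T, N ≤ s → s ≤ t → ψ s - 2 * ε' ≤ ψ t := by
      intro s hsT t htT hNs hst
      have h1 := abs_lt.mp (hN t htT s hsT hNs hst)
      have h2 := abs_lt.mp (hbase t htT (hNs.trans hst))
      have htri : dist (γ t) y ≤ dist (γ t) (γ s) + dist (γ s) y := dist_triangle _ _ _
      simp only [hψ]
      linarith
    -- bounded above
    set S : Set ℝ := ψ '' (T ∩ Set.Ici N) with hS
    have hbdd : BddAbove S := by
      refine ⟨dist (γ 0) y, ?_⟩
      rintro x ⟨u, _, rfl⟩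
      have h := abs_dist_sub_le (γ 0) y (γ u)
      rw [dist_comm (γ 0) (γ u), dist_comm y (γ u)] at h
      simpa [hψ] using (abs_le.mp h).2
    obtain ⟨w, hwT, hwN⟩ := hTunbdd N
    have hSne : S.Nonempty := ⟨ψ w, w, ⟨hwT, le_of_lt hwN⟩, rfl⟩
    set L := sSup S with hL
    obtain ⟨x, hxS, hxgt⟩ := exists_lt_of_lt_csSup hSne (show L - ε' < L by linarith)
    obtain ⟨t0, ht0mem, rfl⟩ := hxS
    obtain ⟨ht0T, ht0N⟩ := ht0mem
    refine ⟨t0, fun t htT s hsT ht0t ht0s => ?_⟩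
    have hNt : N ≤ t := ht0N.trans ht0t
    have hNs : N ≤ s := ht0N.trans ht0s
    have hψtle : ψ t ≤ L := le_csSup hbdd ⟨t, ⟨htT, hNt⟩, rfl⟩
    have hψsle : ψ s ≤ L := le_csSup hbdd ⟨s, ⟨hsT, hNs⟩, rfl⟩
    have hψtgt : L - 3 * ε' < ψ t := by
      have := hmono t0 ht0T t htT ht0N ht0t
      linarith
    have hψsgt : L - 3 * ε' < ψ s := by
      have := hmono t0 ht0T s hsT ht0N ht0s
      linarith
    have hbt := abs_lt.mp (hbase t htT hNt)
    have hbs := abs_lt.mp (hbase s hsT hNs)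
    constructor
    · rw [abs_lt]; constructor <;> linarith
    · have h1 : dist (γ t) y - dist (γ s) y - (t - s)
          = (dist (γ t) (γ 0) - t) - (dist (γ s) (γ 0) - s) - (ψ t - ψ s) := by
        simp only [hψ]; ring
      rw [h1, abs_lt]
      constructor <;> linarith
  · -- (ii) weakly geodesic → limit exists
    intro hw y
    apply aux_tendsto_of_cauchy T hTunbdd
    intro ε hε
    obtain ⟨N, hN⟩ := hw y (ε / 3) (by linarith)
    refine ⟨N, fun t htT s hsT hNt hNs => ?_⟩
    obtain ⟨h1, h2⟩ := hN t htT s hsT hNt hNs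
    obtain ⟨h3, _⟩ := hN s hsT t htT hNs hNt
    have h1' := abs_lt.mp h1
    have h2' := abs_lt.mp h2
    have h3' := abs_lt.mp h3
    rw [abs_lt]
    constructor <;> linarith
  · -- (iii) geodesic
    intro hg y
    have hd0 : ∀ t ∈ T, dist (γ t) (γ 0) = t := by
      intro t htT
      have := hg t htT 0 hT0
      rw [this, sub_zero, abs_of_nonneg (hT htT)]
    constructor
    · intro s hsT t htT hst
      have hds := hd0 s hsT
      have hdt := hd0 t htT
      have hdts : dist (γ t) (γ s) = t - s := by
        rw [hg t htT s hsT, abs_of_nonneg (by linarith)]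
      have htri : dist (γ t) y ≤ dist (γ t) (γ s) + dist (γ s) y := dist_triangle _ _ _
      linarith
    · intro t htT
      have htri : dist (γ t) (γ 0) ≤ dist (γ t) y + dist y (γ 0) := dist_triangle _ _ _
      linarith
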